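/- Let N be an odd positive integer and F ∈ SL(2, ℤ/Nℤ). Call x ∈ (ℤ/Nℤ)² F-full if the points x, Fx, …, F^{n−1}x are pairwise distinct, where n is the order of F. Then the number of F-full points in (ℤ/Nℤ)² is at least N·φ(N). -/

import Mathlib

open Matrix

section base
variable {R : Type*} [CommRing R]

lemma sq_eq_trace_smul {F : Matrix (Fin 2) (Fin 2) R} :
    F * F = (Matrix.trace F) • F - F.det • 1 := by
  ext i j
  fin_cases i <;> fin_cases j <;>
    simp [Matrix.mul_apply, Fin.sum_univ_two, Matrix.trace_fin_two, Matrix.det_fin_two,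
      Matrix.one_apply, Matrix.smul_apply] <;> ring

lemma pow_eq_smul_add {F : Matrix (Fin 2) (Fin 2) R} (hdet : F.det = 1) (k : ℕ) :
    ∃ α β : R, F ^ k = α • F + β • 1 := by
  induction k with
  | zero => exact ⟨0, 1, by simp⟩
  | succ k ih =>
    obtain ⟨α, β, h⟩ := ih
    refine ⟨α * Matrix.trace F + β, -α, ?_⟩
    rw [pow_succ, h, add_mul, smul_mul_assoc, smul_mul_assoc, one_mul, ← pow_two, pow_two,
      sq_eq_trace_smul, hdet]
    rw [smul_sub, smul_smul]
    module

lemma adj_eq {G : Matrix (Fin 2) (Fin 2) R} : G.adjugate = (Matrix.trace G) • 1 - G := by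
  rw [Matrix.adjugate_fin_two]
  ext i j
  fin_cases i <;> fin_cases j <;>
    simp [Matrix.trace_fin_two, Matrix.one_apply, Matrix.smul_apply] <;> ring

lemma unit_coord_cancel {a : R} {x : Fin 2 → R} (hx : IsUnit (x 0) ∨ IsUnit (x 1))
    (h : ∀ i, a * x i = 0) : a = 0 := by
  rcases hx with h' | h'
  · have := h 0; rcases h' with ⟨u, hu⟩
    calc a = a * (x 0 * ↑u⁻¹) := by rw [← hu]; simp [Units.mul_inv]
    _ = 0 := by rw [← mul_assoc, this, zero_mul]
  · have := h 1; rcases h' with ⟨u, hu⟩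
    calc a = a * (x 1 * ↑u⁻¹) := by rw [← hu]; simp [Units.mul_inv]
    _ = 0 := by rw [← mul_assoc, this, zero_mul]

lemma trace_eq_two_of_fix {G : Matrix (Fin 2) (Fin 2) R} (hdet : G.det = 1)
    {x : Fin 2 → R} (hx : IsUnit (x 0) ∨ IsUnit (x 1)) (hfix : G.mulVec x = x) :
    Matrix.trace G = 2 := by
  have h1 : G.adjugate.mulVec x = x := by
    conv_lhs => rw [← hfix]
    rw [Matrix.mulVec_mulVec, Matrix.adjugate_mul, hdet, one_smul, Matrix.one_mulVec]
  rw [adj_eq, Matrix.sub_mulVec, Matrix.smul_mulVec, Matrix.one_mulVec, hfix] at h1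
  have h2 : ∀ i, (Matrix.trace G - 2) * x i = 0 := by
    intro i
    have h3 := congrFun h1 i
    simp only [Pi.sub_apply, Pi.smul_apply, smul_eq_mul] at h3
    linear_combination h3 - x i
  have := unit_coord_cancel hx h2
  linear_combination this

lemma mulVec_two (B : Matrix (Fin 2) (Fin 2) R) (x : Fin 2 → R) (i : Fin 2) :
    B.mulVec x i = B i 0 * x 0 + B i 1 * x 1 := by
  simp [Matrix.mulVec, dotProduct, Fin.sum_univ_two]

lemma mapMatrix_mulVec {S : Type*} [CommRing S] (f : R →+* S) (F : Matrix (Fin 2) (Fin 2) R)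
    (x : Fin 2 → R) : (f.mapMatrix F).mulVec (fun i => f (x i)) = fun i => f (F.mulVec x i) := by
  funext i
  simp [mulVec_two]
end base

section Rigid
variable {p r : ℕ}

lemma castHom_eq_val_cast (hp : p.Prime) (hr : 0 < r) (a : ZMod (p ^ r)) :
    (ZMod.castHom (dvd_pow_self p hr.ne') (ZMod p)) a = ((a.val : ℕ) : ZMod p) := by
  haveI : NeZero (p ^ r) := ⟨pow_ne_zero r hp.pos.ne'⟩
  rw [ZMod.castHom_apply, ZMod.natCast_val]

lemma zmod_unit_iff (hp : p.Prime) (hr : 0 < r) (a : ZMod (p ^ r)) :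
    IsUnit a ↔ (ZMod.castHom (dvd_pow_self p hr.ne') (ZMod p)) a ≠ 0 := by
  haveI : NeZero (p ^ r) := ⟨pow_ne_zero r hp.pos.ne'⟩
  haveI : Fact p.Prime := ⟨hp⟩
  conv_lhs => rw [← ZMod.natCast_zmod_val a]
  rw [ZMod.isUnit_iff_coprime, Nat.coprime_pow_right_iff hr, Nat.coprime_comm,
    hp.coprime_iff_not_dvd, not_iff_not, castHom_eq_val_cast hp hr,
    ZMod.natCast_eq_zero_iff]


lemma two_unit (hp : p.Prime) (hodd : p ≠ 2) (hr : 0 < r) : IsUnit (2 : ZMod (p ^ r)) := by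
  haveI : NeZero (p ^ r) := ⟨pow_ne_zero r hp.pos.ne'⟩
  have := (ZMod.isUnit_iff_coprime 2 (p ^ r)).2 ?_
  · simpa using this
  · rw [Nat.coprime_pow_right_iff hr]
    exact (Nat.coprime_primes Nat.prime_two hp).2 (Ne.symm hodd)

lemma mul_unit_zero {S : Type*} [CommRing S] {a b : S} (hb : IsUnit b) (h : a * b = 0) :
    a = 0 := by
  rcases hb with ⟨u, rfl⟩
  calc a = a * ↑u * ↑u⁻¹ := by simp
  _ = 0 := by rw [h, zero_mul]


lemma zmod_nonunit_dvd {p r : ℕ} (hp : p.Prime) (hr : 0 < r) {a : ZMod (p ^ r)}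
    (h : (ZMod.castHom (dvd_pow_self p hr.ne') (ZMod p)) a = 0) : ∃ b, a = p * b := by
  haveI : NeZero (p ^ r) := ⟨pow_ne_zero r hp.pos.ne'⟩
  haveI : Fact p.Prime := ⟨hp⟩
  rw [castHom_eq_val_cast hp hr, ZMod.natCast_eq_zero_iff] at h
  obtain ⟨c, hc⟩ := h
  exact ⟨(c : ZMod (p ^ r)), by rw [← ZMod.natCast_zmod_val a, hc]; push_cast; ring⟩

/-- Nondegenerate rigidity. -/
lemma rigid (hp : p.Prime) (hp2 : p ≠ 2) (hr : 0 < r)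
    {F : Matrix (Fin 2) (Fin 2) (ZMod (p ^ r))} (hdet : F.det = 1)
    (hD : IsUnit (Matrix.trace F ^ 2 - 4))
    {x : Fin 2 → ZMod (p ^ r)} (hx : IsUnit (x 0) ∨ IsUnit (x 1))
    (k : ℕ) (hGx : (F ^ k).mulVec x = x) : F ^ k = 1 := by
  haveI : NeZero (p ^ r) := ⟨pow_ne_zero r hp.pos.ne'⟩
  haveI : Fact p.Prime := ⟨hp⟩
  set t := Matrix.trace F with ht
  set y := F.mulVec x with hy
  obtain ⟨α, β, hG⟩ := pow_eq_smul_add hdet k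
  have hdetG : (F ^ k).det = 1 := by rw [Matrix.det_pow, hdet, one_pow]
  have htr : α * t + 2 * β = 2 := by
    have h0 := trace_eq_two_of_fix hdetG hx hGx
    rw [hG] at h0
    rw [Matrix.trace_add, Matrix.trace_smul, Matrix.trace_smul, Matrix.trace_one] at h0
    simpa [smul_eq_mul, mul_comm] using h0
  set β₁ : ZMod (p ^ r) := β - 1 with hβ₁
  have htr' : α * t + 2 * β₁ = 0 := by rw [hβ₁]; linear_combination htr
  have hvec : α • y + β • x = x := by
    have h0 := hGx
    rw [hG, Matrix.add_mulVec, Matrix.smul_mulVec, Matrix.smul_mulVec,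
      Matrix.one_mulVec] at h0
    rw [hy]; exact h0
  have e1 : ∀ i, α * y i + β₁ * x i = 0 := by
    intro i
    have h0 := congrFun hvec i
    simp only [Pi.add_apply, Pi.smul_apply, smul_eq_mul] at h0
    rw [hβ₁]; linear_combination h0
  have hFy : F.mulVec y = t • y - x := by
    rw [hy, Matrix.mulVec_mulVec, sq_eq_trace_smul, hdet, one_smul, Matrix.sub_mulVec,
      Matrix.smul_mulVec, Matrix.one_mulVec]
  have e2 : ∀ i, β₁ * y i + α * x i = 0 := by
    intro i
    have h0 : F.mulVec (fun j => α * y j + β₁ * x j) i = 0 := by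
      have hz : (fun j => α * y j + β₁ * x j) = (0 : Fin 2 → ZMod (p ^ r)) := by
        funext j; exact e1 j
      rw [hz, Matrix.mulVec_zero]; rfl
    have h1 : F.mulVec (fun j => α * y j + β₁ * x j) = α • (F.mulVec y) + β₁ • y := by
      have hz : (fun j => α * y j + β₁ * x j) = α • y + β₁ • x := by
        funext j; simp [smul_eq_mul]
      rw [hz, Matrix.mulVec_add, Matrix.mulVec_smul, Matrix.mulVec_smul, ← hy]
    rw [h1, hFy] at h0
    simp only [Pi.add_apply, Pi.smul_apply, Pi.sub_apply, smul_eq_mul] at h0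
    linear_combination -h0 + y i * htr'
  -- the two scalar relations
  set f := ZMod.castHom (dvd_pow_self p hr.ne') (ZMod p) with hf
  set Fb := f.mapMatrix F with hFb
  set xb : Fin 2 → ZMod p := fun i => f (x i) with hxb
  have hdetFb : Fb.det = 1 := by
    rw [hFb, ← RingHom.map_det, hdet, _root_.map_one]
  have hxbne : IsUnit (xb 0) ∨ IsUnit (xb 1) := by
    rcases hx with h | h
    · exact Or.inl (h.map f)
    · exact Or.inr (h.map f)
  have hDne : f (t ^ 2 - 4) ≠ 0 := by
    intro h0
    have := hD.map f
    rw [h0] at this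
    exact not_isUnit_zero this
  have hs : α + β₁ = 0 := by
    by_contra hsne
    have hnu : ∀ i, f (y i + x i) = 0 := by
      intro i
      by_contra hne
      have hu : IsUnit (y i + x i) := (zmod_unit_iff hp hr _).2 (by rw [← hf]; exact hne)
      exact hsne (mul_unit_zero hu (by linear_combination e1 i + e2 i))
    have hFbx : Fb.mulVec xb = -xb := by
      rw [hFb, hxb, mapMatrix_mulVec]
      funext i
      have : f (y i) + f (x i) = 0 := by rw [← map_add]; exact hnu i
      simp only [← hy, Pi.neg_apply]
      linear_combination this
    -- now derive trace ≡ -2 mod p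
    have h2 : ∀ i, (f t + 2) * xb i = 0 := by
      intro i
      have hsq : (Fb * Fb).mulVec xb = (Matrix.trace Fb) • (Fb.mulVec xb) - xb := by
        rw [sq_eq_trace_smul, hdetFb, one_smul, Matrix.sub_mulVec, Matrix.smul_mulVec,
          Matrix.one_mulVec]
      have h3 : (Fb * Fb).mulVec xb = xb := by
        rw [← Matrix.mulVec_mulVec, hFbx, Matrix.mulVec_neg, hFbx, neg_neg]
      rw [h3, hFbx] at hsq
      have h4 := congrFun hsq i
      simp only [Pi.sub_apply, Pi.smul_apply, Pi.neg_apply, smul_eq_mul] at h4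
      have htb : Matrix.trace Fb = f t := by
        rw [hFb, ht]
        simp [Matrix.trace_fin_two, RingHom.mapMatrix_apply]
      rw [htb] at h4
      linear_combination h4
    have hxb0 : f t + 2 = 0 := unit_coord_cancel hxbne h2
    apply hDne
    rw [map_sub, map_pow]
    have : f t = -2 := by linear_combination hxb0
    rw [this, map_ofNat]
    norm_num
  have hd : α - β₁ = 0 := by
    by_contra hdne
    have hnu : ∀ i, f (y i - x i) = 0 := by
      intro i
      by_contra hne
      have hu : IsUnit (y i - x i) := (zmod_unit_iff hp hr _).2 (by rw [← hf]; exact hne)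
      exact hdne (mul_unit_zero hu (by linear_combination e1 i - e2 i))
    have hFbx : Fb.mulVec xb = xb := by
      rw [hFb, hxb, mapMatrix_mulVec]
      funext i
      have : f (y i) - f (x i) = 0 := by rw [← map_sub]; exact hnu i
      simp only [← hy]
      linear_combination this
    have h2 : ∀ i, (f t - 2) * xb i = 0 := by
      intro i
      have hsq : (Fb * Fb).mulVec xb = (Matrix.trace Fb) • (Fb.mulVec xb) - xb := by
        rw [sq_eq_trace_smul, hdetFb, one_smul, Matrix.sub_mulVec, Matrix.smul_mulVec,
          Matrix.one_mulVec]
      have h3 : (Fb * Fb).mulVec xb = xb := by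
        rw [← Matrix.mulVec_mulVec, hFbx, hFbx]
      rw [h3, hFbx] at hsq
      have h4 := congrFun hsq i
      simp only [Pi.sub_apply, Pi.smul_apply, smul_eq_mul] at h4
      have htb : Matrix.trace Fb = f t := by
        rw [hFb, ht]
        simp [Matrix.trace_fin_two, RingHom.mapMatrix_apply]
      rw [htb] at h4
      linear_combination -h4
    have hxb0 : f t - 2 = 0 := unit_coord_cancel hxbne h2
    apply hDne
    rw [map_sub, map_pow]
    have : f t = 2 := by linear_combination hxb0
    rw [this, map_ofNat]
    norm_num
  have hα : α = 0 := by
    have h2u := two_unit hp hp2 hr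
    have : (2 : ZMod (p ^ r)) * α = 0 := by linear_combination hs + hd
    rcases h2u with ⟨u, hu⟩
    calc α = ↑u⁻¹ * (↑u * α) := by rw [← mul_assoc]; simp
    _ = 0 := by rw [hu, this, mul_zero]
  have hβ : β = 1 := by
    have : β₁ = 0 := by linear_combination hs - hα
    rw [hβ₁] at this
    linear_combination this
  rw [hG, hα, hβ]
  simp

end Rigid


/-- A point `x ∈ (ℤ/Nℤ)²` is `F`-full if `x, Fx, …, F^{n-1}x` are pairwise
distinct, where `n = orderOf F`. -/
def IsFull {N : ℕ} (F : Matrix (Fin 2) (Fin 2) (ZMod N))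
    (x : Fin 2 → ZMod N) : Prop :=
  Function.Injective fun i : Fin (orderOf F) => (F ^ (i : ℕ)).mulVec x

section Period
variable {R : Type*} [CommRing R] [Fintype R] [DecidableEq R]

lemma mulVec_inj' {F : Matrix (Fin 2) (Fin 2) R} (hdet : IsUnit F.det) {x y : Fin 2 → R}
    (h : F.mulVec x = F.mulVec y) : x = y := by
  have h2 := congrArg (F⁻¹.mulVec ·) h
  simpa only [Matrix.mulVec_mulVec, Matrix.nonsing_inv_mul F hdet, Matrix.one_mulVec] using h2

lemma orderOf_pos_of_det {F : Matrix (Fin 2) (Fin 2) R} (hdet : F.det = 1) :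
    0 < orderOf F := by
  obtain ⟨u, hu⟩ := (Matrix.isUnit_iff_isUnit_det F).2 (hdet ▸ isUnit_one)
  rw [← hu, orderOf_units]
  exact orderOf_pos u

lemma pow_fix {F : Matrix (Fin 2) (Fin 2) R} {x : Fin 2 → R}
    (h : F.mulVec x = x) (j : ℕ) : (F ^ j).mulVec x = x := by
  induction j with
  | zero => simp [Matrix.one_mulVec]
  | succ j ih => rw [pow_succ, ← Matrix.mulVec_mulVec, h, ih]

lemma gcd_fix {F : Matrix (Fin 2) (Fin 2) R} (hdet : F.det = 1) {x : Fin 2 → R}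
    {k m : ℕ} (hk : (F ^ k).mulVec x = x) (hm : (F ^ m).mulVec x = x) :
    (F ^ (Nat.gcd k m)).mulVec x = x := by
  obtain ⟨u, hu⟩ := (Matrix.isUnit_iff_isUnit_det F).2 (hdet ▸ isUnit_one)
  have key : ∀ z : ℤ, ((u ^ z : (Matrix (Fin 2) (Fin 2) R)ˣ) : Matrix (Fin 2) (Fin 2) R).mulVec x = x →
      True := fun _ _ => trivial
  set S : AddSubgroup ℤ :=
    { carrier := {z : ℤ | ((u ^ z : (Matrix (Fin 2) (Fin 2) R)ˣ) : Matrix (Fin 2) (Fin 2) R).mulVec x = x}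
      zero_mem' := by simp [Matrix.one_mulVec]; ext i; fin_cases i <;> rfl
      add_mem' := by
        intro a b ha hb
        simp only [Set.mem_setOf_eq] at *
        rw [_root_.zpow_add, Units.val_mul, ← Matrix.mulVec_mulVec, hb, ha]
      neg_mem' := by
        intro a ha
        simp only [Set.mem_setOf_eq] at *
        conv_lhs => rw [← ha]
        rw [Matrix.mulVec_mulVec, ← Units.val_mul, ← _root_.zpow_add]
        simp [Matrix.one_mulVec] } with hS
  have hmemnat : ∀ j : ℕ, (F ^ j).mulVec x = x → (j : ℤ) ∈ S := by
    intro j hj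
    show ((u ^ (j : ℤ) : _ˣ) : Matrix (Fin 2) (Fin 2) R).mulVec x = x
    rw [zpow_natCast, Units.val_pow_eq_pow_val, hu]
    exact hj
  have hgcd : ((Nat.gcd k m : ℕ) : ℤ) ∈ S := by
    have hb := Int.gcd_eq_gcd_ab (k : ℤ) (m : ℤ)
    have h1 : (k : ℤ) * Int.gcdA k m ∈ S := by
      have := AddSubgroup.zsmul_mem S (hmemnat k hk) (Int.gcdA k m)
      simpa [smul_eq_mul, mul_comm] using this
    have h2 : (m : ℤ) * Int.gcdB k m ∈ S := by
      have := AddSubgroup.zsmul_mem S (hmemnat m hm) (Int.gcdB k m)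
      simpa [smul_eq_mul, mul_comm] using this
    have : ((Nat.gcd k m : ℕ) : ℤ) = (k : ℤ) * Int.gcdA k m + (m : ℤ) * Int.gcdB k m := by
      rw [← hb]; simp [Int.gcd]
    rw [this]
    exact S.add_mem h1 h2
  have := hgcd
  show (F ^ (Nat.gcd k m)).mulVec x = x
  have h3 : ((u ^ ((Nat.gcd k m : ℕ) : ℤ) : _ˣ) : Matrix (Fin 2) (Fin 2) R).mulVec x = x := this
  rwa [zpow_natCast, Units.val_pow_eq_pow_val, hu] at h3

end Period

section FullIff
variable {N : ℕ} [NeZero N]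

lemma isFull_iff {F : Matrix (Fin 2) (Fin 2) (ZMod N)} (hdet : F.det = 1)
    (x : Fin 2 → ZMod N) :
    IsFull F x ↔ ∀ k, 0 < k → k < orderOf F → (F ^ k).mulVec x ≠ x := by
  constructor
  · intro hinj k hk hkn hfix
    have h0 : (fun i : Fin (orderOf F) => (F ^ (i : ℕ)).mulVec x) ⟨k, hkn⟩ =
        (fun i : Fin (orderOf F) => (F ^ (i : ℕ)).mulVec x) ⟨0, hk.trans hkn⟩ := by
      simpa [Matrix.one_mulVec] using hfix
    have := hinj h0
    simp only [Fin.mk.injEq] at this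
    omega
  · intro h i j hij
    simp only at hij
    have key : ∀ i j : Fin (orderOf F), (i : ℕ) ≤ (j : ℕ) →
        (F ^ (i : ℕ)).mulVec x = (F ^ (j : ℕ)).mulVec x → i = j := by
      intro i j hle he
      have hdetpow : IsUnit ((F ^ (i : ℕ)).det) := by
        rw [Matrix.det_pow, hdet, one_pow]; exact isUnit_one
      have hexp : (i : ℕ) + ((j : ℕ) - (i : ℕ)) = (j : ℕ) := by omega
      have hsplit : (F ^ (j : ℕ)).mulVec x = (F ^ (i : ℕ)).mulVec ((F ^ ((j : ℕ) - i)).mulVec x) := by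
        rw [Matrix.mulVec_mulVec, ← pow_add, hexp]
      rw [hsplit] at he
      have hx : (F ^ ((j : ℕ) - i)).mulVec x = x := (mulVec_inj' hdetpow he).symm
      rcases Nat.eq_zero_or_pos ((j : ℕ) - i) with h0 | hpos
      · ext; omega
      · exact absurd hx (h _ hpos (by omega))
    rcases le_total (i : ℕ) (j : ℕ) with hle | hle
    · exact key i j hle hij
    · exact (key j i hle hij.symm).symm

end FullIff


section Count

lemma card_ker_mul_card_range {G H : Type*} [AddCommGroup G] [AddCommGroup H] [Fintype G]
    (φ : G →+ H) : Nat.card {x // φ x = 0} * Nat.card φ.range = Nat.card G := by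
  have h1 := AddSubgroup.card_eq_card_quotient_mul_card_addSubgroup φ.ker
  have h2 : Nat.card (G ⧸ φ.ker) = Nat.card φ.range :=
    Nat.card_congr (QuotientAddGroup.quotientKerEquivRange φ).toEquiv
  have h3 : Nat.card {x // φ x = 0} = Nat.card φ.ker := by
    apply Nat.card_congr
    exact Equiv.subtypeEquivRight (fun x => by simp [AddMonoidHom.mem_ker])
  rw [h3, mul_comm]
  rw [h1, h2]

lemma card_bound {p r : ℕ} (hp : p.Prime) (hr : 0 < r) {H : Type*} [AddCommGroup H]
    (P : (Fin 2 → ZMod (p ^ r)) → Prop)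
    (φ : (Fin 2 → ZMod (p ^ r)) →+ H)
    (hker : ∀ x, ¬ P x → φ x = 0)
    (hrange : p ≤ Nat.card φ.range) :
    p ^ (2 * r) - p ^ (2 * r - 1) ≤ Nat.card {x // P x} := by
  classical
  haveI : NeZero (p ^ r) := ⟨pow_ne_zero r hp.pos.ne'⟩
  have htotal : Nat.card (Fin 2 → ZMod (p ^ r)) = p ^ (2 * r) := by
    rw [Nat.card_eq_fintype_card, Fintype.card_fun, ZMod.card]
    simp [← pow_mul, mul_comm]
  have hprod := card_ker_mul_card_range φ
  rw [htotal] at hprod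
  have hkerle : Nat.card {x // ¬ P x} ≤ Nat.card {x // φ x = 0} := by
    apply Nat.card_le_card_of_injective (fun x => ⟨x.1, hker x.1 x.2⟩)
    intro a b hab
    simpa [Subtype.ext_iff] using hab
  have hkerbound : Nat.card {x // φ x = 0} ≤ p ^ (2 * r - 1) := by
    have h4 : Nat.card {x // φ x = 0} * p ≤ p ^ (2 * r) := by
      calc Nat.card {x // φ x = 0} * p ≤ Nat.card {x // φ x = 0} * Nat.card φ.range :=
        Nat.mul_le_mul_left _ hrange
      _ = p ^ (2 * r) := hprod
    have h5 : p ^ (2 * r) = p ^ (2 * r - 1) * p := by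
      rw [← pow_succ]
      congr 1
      omega
    rw [h5] at h4
    exact Nat.le_of_mul_le_mul_right h4 hp.pos
  have hcompl : Nat.card {x // P x} + Nat.card {x // ¬ P x} = p ^ (2 * r) := by
    rw [Nat.card_eq_fintype_card, Nat.card_eq_fintype_card, Fintype.card_subtype_compl, ← htotal,
      Nat.card_eq_fintype_card]
    have := Fintype.card_subtype_le (p := P)
    omega
  omega

lemma range_bound_linform {p r : ℕ} (hp : p.Prime) (hr : 0 < r)
    {a b : ZMod (p ^ r)} (hab : a ≠ 0 ∨ b ≠ 0)
    (φ : (Fin 2 → ZMod (p ^ r)) →+ ZMod (p ^ r))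
    (hφ : ∀ x, φ x = a * x 0 + b * x 1) :
    p ≤ Nat.card φ.range := by
  haveI : NeZero (p ^ r) := ⟨pow_ne_zero r hp.pos.ne'⟩
  have key : ∀ c : ZMod (p ^ r), c ≠ 0 → c ∈ φ.range → p ≤ Nat.card φ.range := by
    intro c hc hcr
    have hle : AddSubgroup.zmultiples c ≤ φ.range := by
      rw [AddSubgroup.zmultiples_le]
      exact hcr
    have h1 : Nat.card (AddSubgroup.zmultiples c) ≤ Nat.card φ.range :=
      Nat.card_le_card_of_injective _ (AddSubgroup.inclusion_injective hle)
    have h2 : Nat.card (AddSubgroup.zmultiples c) = addOrderOf c := Nat.card_zmultiples c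
    have h3 : addOrderOf c ∣ p ^ r := by
      have := addOrderOf_dvd_card (x := c)
      rwa [ZMod.card] at this
    obtain ⟨j, hj, hjeq⟩ := (Nat.dvd_prime_pow hp).1 h3
    have hj0 : j ≠ 0 := by
      rintro rfl
      rw [pow_zero] at hjeq
      rw [AddMonoid.addOrderOf_eq_one_iff] at hjeq
      exact hc hjeq
    have : p ≤ addOrderOf c := by
      rw [hjeq]
      calc p = p ^ 1 := (pow_one p).symm
      _ ≤ p ^ j := Nat.pow_le_pow_right hp.pos (by omega)
    omega
  rcases hab with h | h
  · exact key a h ⟨![1, 0], by simp [hφ]⟩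
  · exact key b h ⟨![0, 1], by simp [hφ]⟩

lemma range_bound_cast {p r : ℕ} (hp : p.Prime) (hr : 0 < r)
    (φ : (Fin 2 → ZMod (p ^ r)) →+ ZMod p)
    (hφ : ∀ x, φ x = (ZMod.castHom (dvd_pow_self p hr.ne') (ZMod p)) (x 0)) :
    p ≤ Nat.card φ.range := by
  haveI : NeZero (p ^ r) := ⟨pow_ne_zero r hp.pos.ne'⟩
  haveI : Fact p.Prime := ⟨hp⟩
  have hsurj : Function.Surjective φ := by
    intro y
    refine ⟨fun _ => (y.val : ZMod (p ^ r)), ?_⟩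
    rw [hφ]
    simp [ZMod.natCast_zmod_val]
  have h1 : φ.range = ⊤ := AddMonoidHom.range_eq_top.2 hsurj
  rw [h1]
  have h2 : Nat.card (⊤ : AddSubgroup (ZMod p)) = Nat.card (ZMod p) :=
    Nat.card_congr AddSubgroup.topEquiv.toEquiv
  rw [h2, Nat.card_eq_fintype_card, ZMod.card]

end Count


section base2
variable {R : Type*} [CommRing R]

lemma pow_one_add {A E : Matrix (Fin 2) (Fin 2) R} {u : R} (hA2 : A * A = u • E) (j : ℕ) :
    ∃ Ej, (1 + A) ^ j = 1 + (j : R) • A + u • Ej := by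
  induction j with
  | zero => exact ⟨0, by simp⟩
  | succ j ih =>
    obtain ⟨Ej, hEj⟩ := ih
    refine ⟨(j : R) • E + Ej + Ej * A, ?_⟩
    rw [pow_succ, hEj]
    push_cast
    rw [mul_add, mul_one, add_mul, add_mul, one_mul, smul_mul_assoc, smul_mul_assoc, hA2]
    module

/-- If `H` has det 1 and trace ≡ 2 mod u, then `(H - 1)² = (trace H - 2) • H`. -/
lemma sub_one_sq {H : Matrix (Fin 2) (Fin 2) R} (hdet : H.det = 1) :
    (H - 1) * (H - 1) = (Matrix.trace H - 2) • H := by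
  have h := sq_eq_trace_smul (F := H)
  rw [hdet] at h
  have expand : (H - 1) * (H - 1) = H * H - H - H + 1 := by noncomm_ring
  rw [expand, h]
  rw [sub_smul]
  module

end base2

section Unipotent
variable {p r : ℕ}

lemma unipotent_pow (hp : p.Prime) (hr : 0 < r) {H : Matrix (Fin 2) (Fin 2) (ZMod (p ^ r))}
    (hdet : H.det = 1) (hτ : ∃ τ, Matrix.trace H - 2 = (p : ZMod (p ^ r)) * τ) :
    H ^ (p ^ r) = 1 := by
  obtain ⟨τ, hτ⟩ := hτ
  haveI : NeZero (p ^ r) := ⟨pow_ne_zero r hp.pos.ne'⟩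
  have main : ∀ k : ℕ, ∃ C : Matrix (Fin 2) (Fin 2) (ZMod (p ^ r)),
      H ^ (p ^ k) = 1 + C ∧
      (∃ E, C * C = ((p : ZMod (p ^ r)) ^ (k + 1)) • E) ∧
      (∃ D, C = ((p : ZMod (p ^ r)) ^ k) • D) := by
    intro k
    induction k with
    | zero =>
      refine ⟨H - 1, by simp, ⟨τ • H, ?_⟩, ⟨H - 1, by simp⟩⟩
      rw [sub_one_sq hdet, hτ, pow_one]
      module
    | succ k ih =>
      obtain ⟨C, hC, ⟨E, hE⟩, ⟨D, hD⟩⟩ := ih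
      obtain ⟨Ep, hEp⟩ := pow_one_add hE p
      refine ⟨((p : ZMod (p ^ r)) ^ (k + 1)) • (D + Ep), ?_, ?_, ?_⟩
      · rw [pow_succ, pow_mul] at *
        rw [hC, hEp]
        rw [smul_add]
        have hpC : (p : ZMod (p ^ r)) • C = ((p : ZMod (p ^ r)) ^ (k + 1)) • D := by
          rw [hD, smul_smul, pow_succ, mul_comm]
        rw [← hpC]
        module
      · refine ⟨((p : ZMod (p ^ r)) ^ k) • ((D + Ep) * (D + Ep)), ?_⟩
        rw [smul_mul_assoc, mul_smul_comm]
        rw [smul_smul, smul_smul]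
        congr 1
        ring
      · exact ⟨D + Ep, rfl⟩
  obtain ⟨C, hC, _, ⟨D, hD⟩⟩ := main r
  have hzero : ((p : ZMod (p ^ r)) ^ r) = 0 := by
    rw [← Nat.cast_pow, ZMod.natCast_self]
  rw [hC, hD, hzero, zero_smul, add_zero]

end Unipotent


section NegOne
variable {p r : ℕ}

lemma smul_matrix_cancel {R : Type*} [CommRing R] {a : R} (ha : IsUnit a)
    {G G' : Matrix (Fin 2) (Fin 2) R} (h : a • G = a • G') : G = G' := by
  ext i j
  have := congrFun (congrFun h i) j
  simp only [Matrix.smul_apply, smul_eq_mul] at this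
  exact ha.mul_left_cancel this

lemma order_two_neg_one (hp : p.Prime) (hp2 : p ≠ 2) (hr : 0 < r)
    {G : Matrix (Fin 2) (Fin 2) (ZMod (p ^ r))} (hdet : G.det = 1)
    (hsq : G * G = 1) (hne : G ≠ 1) : G = -1 := by
  haveI : NeZero (p ^ r) := ⟨pow_ne_zero r hp.pos.ne'⟩
  haveI : Fact p.Prime := ⟨hp⟩
  set t := Matrix.trace G with ht
  have h2u : IsUnit (2 : ZMod (p ^ r)) := by
    have := (ZMod.isUnit_iff_coprime 2 (p ^ r)).2 ?_
    · simpa using this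
    · rw [Nat.coprime_pow_right_iff hr]
      exact (Nat.coprime_primes Nat.prime_two hp).2 (Ne.symm hp2)
  have hkey : t • G = (2 : ZMod (p ^ r)) • 1 := by
    have h := sq_eq_trace_smul (F := G)
    rw [hdet, hsq, one_smul] at h
    have h1 : t • G = 1 + 1 := by rw [← ht] at h; linear_combination (norm := module) -h
    rw [h1, two_smul]
  have htsq : t * t = 2 * 2 := by
    have hd := congrArg Matrix.det hkey
    rw [Matrix.det_smul, Matrix.det_smul, hdet, Matrix.det_one] at hd
    simpa [Fintype.card_fin, pow_two] using hd
  have hfact : (t - 2) * (t + 2) = 0 := by linear_combination htsq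
  set f := ZMod.castHom (dvd_pow_self p hr.ne') (ZMod p) with hf
  have hnot4 : f (4 : ZMod (p ^ r)) ≠ 0 := by
    rw [map_ofNat]
    intro h4
    have : ((4 : ℕ) : ZMod p) = 0 := by exact_mod_cast h4
    rw [ZMod.natCast_eq_zero_iff] at this
    have h2 : p ∣ 2 ^ 2 := by simpa using this
    exact hp2 ((Nat.prime_dvd_prime_iff_eq hp Nat.prime_two).1 (hp.dvd_of_dvd_pow h2))
  have hcase : t = 2 ∨ t = -2 := by
    by_cases hu : IsUnit (t - 2)
    · right
      have := hu.mul_left_cancel (by rw [hfact, mul_zero] : (t-2) * (t+2) = (t-2) * 0)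
      linear_combination this
    · left
      have hz : f (t - 2) = 0 := by
        by_contra hne'
        exact hu ((zmod_unit_iff hp hr _).2 hne')
      have hu2 : IsUnit (t + 2) := by
        rw [zmod_unit_iff hp hr]
        intro h0
        apply hnot4
        have : f (t + 2) - f (t - 2) = f 4 := by
          rw [← map_sub]; congr 1; ring
        rw [h0, hz] at this
        rw [← this]; ring
      have := hu2.mul_left_cancel (by rw [mul_comm, hfact, mul_zero] : (t+2) * (t-2) = (t+2) * 0)
      linear_combination this
  rcases hcase with h | h
  · exfalso
    apply hne
    apply smul_matrix_cancel h2u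
    rw [← hkey, h]
  · apply smul_matrix_cancel h2u
    have h5 : (2 : ZMod (p ^ r)) • G = -(t • G) := by rw [h]; module
    rw [h5, hkey]
    module


end NegOne

section PrimePow
variable {p r : ℕ}

theorem prime_pow_case (hp : p.Prime) (hp2 : p ≠ 2) (hr : 0 < r)
    (F : Matrix (Fin 2) (Fin 2) (ZMod (p ^ r))) (hdet : F.det = 1) :
    (p ^ r) * (p ^ r).totient ≤ Nat.card {x : Fin 2 → ZMod (p ^ r) // IsFull F x} := by
  haveI : NeZero (p ^ r) := ⟨pow_ne_zero r hp.pos.ne'⟩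
  haveI : Fact p.Prime := ⟨hp⟩
  -- arithmetic : p^r * φ(p^r) = p^(2r) - p^(2r-1)
  have harith : (p ^ r) * (p ^ r).totient ≤ p ^ (2 * r) - p ^ (2 * r - 1) := by
    rw [Nat.totient_prime_pow hp hr]
    have h1 : p ^ r * (p ^ (r - 1) * (p - 1)) = p ^ (2 * r - 1) * (p - 1) := by
      rw [← mul_assoc, ← pow_add]
      congr 2
      omega
    have h2 : p ^ (2 * r) = p ^ (2 * r - 1) * p := by
      rw [← pow_succ]
      congr 1
      omega
    rw [h1, Nat.mul_sub, h2, mul_one]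
  refine le_trans harith ?_
  set f := ZMod.castHom (dvd_pow_self p hr.ne') (ZMod p) with hf
  by_cases hD : IsUnit (Matrix.trace F ^ 2 - 4)
  · -- nondegenerate case
    set φ : (Fin 2 → ZMod (p ^ r)) →+ ZMod p :=
      f.toAddMonoidHom.comp (Pi.evalAddMonoidHom (fun _ : Fin 2 => ZMod (p ^ r)) 0) with hφ
    have hφx : ∀ x : Fin 2 → ZMod (p ^ r), φ x = f (x 0) := fun x => rfl
    refine card_bound hp hr _ φ ?_ (range_bound_cast hp hr φ hφx)
    intro x hnf
    rw [hφx]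
    by_contra hne
    apply hnf
    have hx0 : IsUnit (x 0) := (zmod_unit_iff hp hr _).2 hne
    rw [isFull_iff hdet]
    intro k hk hkn hfix
    exact pow_ne_one_of_lt_orderOf (by omega) hkn (rigid hp hp2 hr hdet hD (Or.inl hx0) k hfix)
  · -- degenerate case
    have hD0 : f (Matrix.trace F ^ 2 - 4) = 0 := by
      by_contra hne
      exact hD ((zmod_unit_iff hp hr _).2 hne)
    have hft : f (Matrix.trace F) = 2 ∨ f (Matrix.trace F) = -2 := by
      have h1 : (f (Matrix.trace F) - 2) * (f (Matrix.trace F) + 2) = 0 := by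
        have h2 : f (Matrix.trace F) ^ 2 - 4 = 0 := by
          rw [← map_pow]
          have : f (Matrix.trace F ^ 2) - f 4 = 0 := by rw [← map_sub]; exact hD0
          rw [map_ofNat] at this
          linear_combination this
        linear_combination h2
      rcases mul_eq_zero.1 h1 with h | h
      · left; linear_combination h
      · right; linear_combination h
    obtain ⟨H, hHdet, hHtr, hHsq⟩ :
        ∃ H : Matrix (Fin 2) (Fin 2) (ZMod (p ^ r)),
          H.det = 1 ∧ f (Matrix.trace H) = 2 ∧ H * H = F * F := by
      rcases hft with h | h
      · exact ⟨F, hdet, h, rfl⟩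
      · refine ⟨-F, ?_, ?_, by noncomm_ring⟩
        · rw [Matrix.det_neg, hdet]
          norm_num
        · rw [Matrix.trace_neg, map_neg, h]
          ring
    have hτ : ∃ τ, Matrix.trace H - 2 = (p : ZMod (p ^ r)) * τ := by
      apply zmod_nonunit_dvd hp hr
      rw [map_sub, hHtr, map_ofNat]
      ring
    have hHpow : H ^ (p ^ r) = 1 := unipotent_pow hp hr hHdet hτ
    have hFpow : F ^ (2 * p ^ r) = 1 := by
      calc F ^ (2 * p ^ r) = (F * F) ^ (p ^ r) := by
            rw [(Commute.refl F).mul_pow, ← pow_add, two_mul]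
      _ = (H * H) ^ (p ^ r) := by rw [hHsq]
      _ = H ^ (p ^ r) * H ^ (p ^ r) := (Commute.refl H).mul_pow _
      _ = 1 := by rw [hHpow, one_mul]
    set n := orderOf F with hn
    have hn_pos : 0 < n := orderOf_pos_of_det hdet
    have hndvd : n ∣ 2 * p ^ r := orderOf_dvd_of_pow_eq_one hFpow
    have h2u : IsUnit (2 : ZMod (p ^ r)) := two_unit hp hp2 hr
    -- key : a non-full point is 0 or killed by F^(n/p) - 1
    have key : ∀ x : Fin 2 → ZMod (p ^ r), ¬ IsFull F x →
        x = 0 ∨ (p ∣ n ∧ (F ^ (n / p)).mulVec x = x) := by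
      intro x hnf
      rw [isFull_iff hdet] at hnf
      push_neg at hnf
      obtain ⟨k, hk0, hkn, hfix⟩ := hnf
      have hnfix : (F ^ n).mulVec x = x := by
        rw [hn, pow_orderOf_eq_one, Matrix.one_mulVec]
      have hgfix : (F ^ (Nat.gcd k n)).mulVec x = x := gcd_fix hdet hfix hnfix
      set g := Nat.gcd k n with hg
      have hgdvd : g ∣ n := Nat.gcd_dvd_right k n
      have hgk : g ≤ k := Nat.le_of_dvd hk0 (Nat.gcd_dvd_left k n)
      have hglt : g < n := lt_of_le_of_lt hgk hkn
      have hg0 : 0 < g := Nat.gcd_pos_of_pos_left _ hk0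
      set m := n / g with hm
      have hmul : g * m = n := Nat.mul_div_cancel' hgdvd
      have hm1 : m ≠ 1 := by
        intro h1
        rw [h1, mul_one] at hmul
        omega
      obtain ⟨q, hq, hqm⟩ : ∃ q, q.Prime ∧ q ∣ m := ⟨m.minFac, Nat.minFac_prime hm1, Nat.minFac_dvd m⟩
      have hqn : q ∣ n := hqm.trans (by rw [hm]; exact Nat.div_dvd_of_dvd hgdvd)
      obtain ⟨w, hw⟩ := hqm
      have hnq : n / q = g * w := by
        rw [← hmul, hw, ← mul_assoc, mul_comm g q, mul_assoc]
        exact Nat.mul_div_cancel_left _ hq.pos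
      have hfixnq : (F ^ (n / q)).mulVec x = x := by
        rw [hnq, pow_mul]
        exact pow_fix hgfix w
      have hq2p : q = 2 ∨ q = p := by
        rcases (Nat.Prime.dvd_mul hq).1 (hqn.trans hndvd) with h | h
        · exact Or.inl ((Nat.prime_dvd_prime_iff_eq hq Nat.prime_two).1 h)
        · exact Or.inr ((Nat.prime_dvd_prime_iff_eq hq hp).1 (hq.dvd_of_dvd_pow h))
      rcases hq2p with heq | heq
      · -- q = 2 : F^(n/2) = -1 so x = 0
        left
        rw [heq] at hfixnq hqn
        have h2n : 2 ∣ n := hqn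
        have hG2 : (F ^ (n / 2)) * (F ^ (n / 2)) = 1 := by
          rw [← pow_add]
          have hh : n / 2 + n / 2 = n := by omega
          rw [hh, hn, pow_orderOf_eq_one]
        have hGne : F ^ (n / 2) ≠ 1 :=
          pow_ne_one_of_lt_orderOf (by omega) (by omega)
        have hGdet : (F ^ (n / 2)).det = 1 := by rw [Matrix.det_pow, hdet, one_pow]
        have hneg := order_two_neg_one hp hp2 hr hGdet hG2 hGne
        rw [hneg] at hfixnq
        rw [Matrix.neg_mulVec, Matrix.one_mulVec] at hfixnq
        funext i
        have h2x : (2 : ZMod (p ^ r)) * x i = 0 := by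
          have := congrFun hfixnq i
          simp only [Pi.neg_apply] at this
          linear_combination -this
        rcases h2u with ⟨u, hu⟩
        have : x i = ↑u⁻¹ * (↑u * x i) := by rw [← mul_assoc]; simp
        rw [hu, h2x, mul_zero] at this
        simpa using this
      · -- q = p
        right
        rw [heq] at hfixnq hqn
        exact ⟨hqn, hfixnq⟩
    by_cases hpn : p ∣ n
    · -- use the linear form given by a row of B = F^(n/p) - 1
      set B := F ^ (n / p) - 1 with hB
      have hBne : B ≠ 0 := by
        intro h0
        have h1 : F ^ (n / p) = 1 := by
          have := sub_eq_zero.1 h0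
          exact this
        have hlt : n / p < n := Nat.div_lt_self hn_pos hp.one_lt
        have hpos : 0 < n / p := Nat.div_pos (Nat.le_of_dvd hn_pos hpn) hp.pos
        exact pow_ne_one_of_lt_orderOf (by omega) hlt h1
      obtain ⟨i, j, hij⟩ : ∃ i j, B i j ≠ 0 := by
        by_contra hall
        push_neg at hall
        exact hBne (by ext i j; simpa using hall i j)
      have hab : B i 0 ≠ 0 ∨ B i 1 ≠ 0 := by
        have hj : j = 0 ∨ j = 1 := by omega
        rcases hj with rfl | rfl
        · exact Or.inl hij
        · exact Or.inr hij
      set φ : (Fin 2 → ZMod (p ^ r)) →+ ZMod (p ^ r) :=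
        { toFun := fun x => B i 0 * x 0 + B i 1 * x 1
          map_zero' := by simp
          map_add' := by intro x y; simp only [Pi.add_apply]; ring } with hφ
      have hφx : ∀ x : Fin 2 → ZMod (p ^ r), φ x = B i 0 * x 0 + B i 1 * x 1 := fun x => rfl
      refine card_bound hp hr _ φ ?_ (range_bound_linform hp hr hab φ hφx)
      intro x hnf
      rcases key x hnf with rfl | ⟨_, hfix⟩
      · simp [hφx]
      · rw [hφx]
        have hBx : (B.mulVec x) i = 0 := by
          rw [hB, Matrix.sub_mulVec, Matrix.one_mulVec, hfix]
          simp
        rw [mulVec_two] at hBx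
        exact hBx
    · -- p does not divide n : n ∣ 2, non-full points are 0
      set φ : (Fin 2 → ZMod (p ^ r)) →+ ZMod p :=
        f.toAddMonoidHom.comp (Pi.evalAddMonoidHom (fun _ : Fin 2 => ZMod (p ^ r)) 0) with hφ
      have hφx : ∀ x : Fin 2 → ZMod (p ^ r), φ x = f (x 0) := fun x => rfl
      refine card_bound hp hr _ φ ?_ (range_bound_cast hp hr φ hφx)
      intro x hnf
      rcases key x hnf with rfl | ⟨hpn', _⟩
      · simp [hφx]
      · exact absurd hpn' hpn

end PrimePow

section CRT
variable {a b : ℕ}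

lemma fix_dvd {N : ℕ} [NeZero N] {F : Matrix (Fin 2) (Fin 2) (ZMod N)} (hdet : F.det = 1)
    {x : Fin 2 → ZMod N} (hfull : IsFull F x) {k : ℕ} (hfix : (F ^ k).mulVec x = x) :
    orderOf F ∣ k := by
  have hpos : 0 < orderOf F := orderOf_pos_of_det hdet
  have hsplit : F ^ k = F ^ (k % orderOf F) := by
    conv_lhs => rw [← Nat.div_add_mod k (orderOf F)]
    rw [pow_add, pow_mul, pow_orderOf_eq_one, one_pow, one_mul]
  rw [hsplit] at hfix
  rcases Nat.eq_zero_or_pos (k % orderOf F) with h0 | hp0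
  · exact Nat.dvd_of_mod_eq_zero h0
  · exact absurd hfix ((isFull_iff hdet x).1 hfull _ hp0 (Nat.mod_lt _ hpos))

lemma crt_zero (hco : a.Coprime b) [NeZero a] [NeZero b] {c : ZMod (a * b)}
    (h1 : ZMod.castHom (dvd_mul_right a b) (ZMod a) c = 0)
    (h2 : ZMod.castHom (dvd_mul_left b a) (ZMod b) c = 0) : c = 0 := by
  haveI : NeZero (a * b) := ⟨mul_ne_zero (NeZero.ne a) (NeZero.ne b)⟩
  have ha : (c.val : ZMod a) = 0 := by
    rw [← h1, ZMod.castHom_apply, ZMod.natCast_val]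
  have hb : (c.val : ZMod b) = 0 := by
    rw [← h2, ZMod.castHom_apply, ZMod.natCast_val]
  rw [ZMod.natCast_eq_zero_iff] at ha hb
  have : a * b ∣ c.val := Nat.Coprime.mul_dvd_of_dvd_of_dvd hco ha hb
  rw [← ZMod.natCast_zmod_val c, ZMod.natCast_eq_zero_iff]
  exact this

lemma crt_exists (hco : a.Coprime b) [NeZero a] [NeZero b] (y : ZMod a) (z : ZMod b) :
    ∃ c : ZMod (a * b), ZMod.castHom (dvd_mul_right a b) (ZMod a) c = y ∧
      ZMod.castHom (dvd_mul_left b a) (ZMod b) c = z := by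
  obtain ⟨k, hk1, hk2⟩ := Nat.chineseRemainder hco y.val z.val
  refine ⟨(k : ZMod (a * b)), ?_, ?_⟩
  · rw [map_natCast]
    rw [show ((k : ℕ) : ZMod a) = ((y.val : ℕ) : ZMod a) from (ZMod.natCast_eq_natCast_iff _ _ _).2 hk1]
    exact ZMod.natCast_zmod_val y
  · rw [map_natCast]
    rw [show ((k : ℕ) : ZMod b) = ((z.val : ℕ) : ZMod b) from (ZMod.natCast_eq_natCast_iff _ _ _).2 hk2]
    exact ZMod.natCast_zmod_val z

lemma crt_matrix_one (hco : a.Coprime b) [NeZero a] [NeZero b]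
    {M : Matrix (Fin 2) (Fin 2) (ZMod (a * b))}
    (h1 : (ZMod.castHom (dvd_mul_right a b) (ZMod a)).mapMatrix M = 1)
    (h2 : (ZMod.castHom (dvd_mul_left b a) (ZMod b)).mapMatrix M = 1) : M = 1 := by
  ext i j
  have e1 : ZMod.castHom (dvd_mul_right a b) (ZMod a) (M i j - (1 : Matrix (Fin 2) (Fin 2) (ZMod (a*b))) i j) = 0 := by
    rw [map_sub]
    have hm : ZMod.castHom (dvd_mul_right a b) (ZMod a) (M i j)
        = ZMod.castHom (dvd_mul_right a b) (ZMod a) ((1 : Matrix (Fin 2) (Fin 2) (ZMod (a*b))) i j) := by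
      calc ZMod.castHom (dvd_mul_right a b) (ZMod a) (M i j)
          = ((ZMod.castHom (dvd_mul_right a b) (ZMod a)).mapMatrix M) i j := rfl
      _ = (1 : Matrix (Fin 2) (Fin 2) (ZMod a)) i j := by rw [h1]
      _ = ZMod.castHom (dvd_mul_right a b) (ZMod a) ((1 : Matrix (Fin 2) (Fin 2) (ZMod (a*b))) i j) := by
          rw [Matrix.one_apply, Matrix.one_apply]
          split
          · exact (_root_.map_one _).symm
          · exact (map_zero _).symm
    rw [hm, sub_self]
  have e2 : ZMod.castHom (dvd_mul_left b a) (ZMod b) (M i j - (1 : Matrix (Fin 2) (Fin 2) (ZMod (a*b))) i j) = 0 := by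
    rw [map_sub]
    have hm : ZMod.castHom (dvd_mul_left b a) (ZMod b) (M i j)
        = ZMod.castHom (dvd_mul_left b a) (ZMod b) ((1 : Matrix (Fin 2) (Fin 2) (ZMod (a*b))) i j) := by
      calc ZMod.castHom (dvd_mul_left b a) (ZMod b) (M i j)
          = ((ZMod.castHom (dvd_mul_left b a) (ZMod b)).mapMatrix M) i j := rfl
      _ = (1 : Matrix (Fin 2) (Fin 2) (ZMod b)) i j := by rw [h2]
      _ = ZMod.castHom (dvd_mul_left b a) (ZMod b) ((1 : Matrix (Fin 2) (Fin 2) (ZMod (a*b))) i j) := by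
          rw [Matrix.one_apply, Matrix.one_apply]
          split
          · exact (_root_.map_one _).symm
          · exact (map_zero _).symm
    rw [hm, sub_self]
  have := crt_zero hco e1 e2
  have h3 : M i j = (1 : Matrix (Fin 2) (Fin 2) (ZMod (a*b))) i j := by
    have h4 := sub_eq_zero.1 this
    exact h4
  exact h3

lemma crt_order (hco : a.Coprime b) [NeZero a] [NeZero b]
    (F : Matrix (Fin 2) (Fin 2) (ZMod (a * b))) :
    orderOf F = Nat.lcm (orderOf ((ZMod.castHom (dvd_mul_right a b) (ZMod a)).mapMatrix F))
      (orderOf ((ZMod.castHom (dvd_mul_left b a) (ZMod b)).mapMatrix F)) := by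
  set Fa := (ZMod.castHom (dvd_mul_right a b) (ZMod a)).mapMatrix F with hFa
  set Fb := (ZMod.castHom (dvd_mul_left b a) (ZMod b)).mapMatrix F with hFb
  have hiff : ∀ k : ℕ, F ^ k = 1 ↔ Fa ^ k = 1 ∧ Fb ^ k = 1 := by
    intro k
    constructor
    · intro h
      constructor
      · rw [hFa, ← map_pow, h, _root_.map_one]
      · rw [hFb, ← map_pow, h, _root_.map_one]
    · rintro ⟨h1, h2⟩
      apply crt_matrix_one hco
      · rw [map_pow, ← hFa]; exact h1
      · rw [map_pow, ← hFb]; exact h2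
  apply Nat.dvd_antisymm
  · rw [orderOf_dvd_iff_pow_eq_one, hiff]
    constructor
    · exact orderOf_dvd_iff_pow_eq_one.1 (Nat.dvd_lcm_left _ _)
    · exact orderOf_dvd_iff_pow_eq_one.1 (Nat.dvd_lcm_right _ _)
  · apply Nat.lcm_dvd
    · rw [orderOf_dvd_iff_pow_eq_one]
      exact ((hiff (orderOf F)).1 (pow_orderOf_eq_one F)).1
    · rw [orderOf_dvd_iff_pow_eq_one]
      exact ((hiff (orderOf F)).1 (pow_orderOf_eq_one F)).2

lemma full_of_components (hco : a.Coprime b) [NeZero a] [NeZero b]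
    {F : Matrix (Fin 2) (Fin 2) (ZMod (a * b))} (hdet : F.det = 1)
    {x : Fin 2 → ZMod (a * b)}
    (hy : IsFull ((ZMod.castHom (dvd_mul_right a b) (ZMod a)).mapMatrix F)
      (fun i => ZMod.castHom (dvd_mul_right a b) (ZMod a) (x i)))
    (hz : IsFull ((ZMod.castHom (dvd_mul_left b a) (ZMod b)).mapMatrix F)
      (fun i => ZMod.castHom (dvd_mul_left b a) (ZMod b) (x i))) : IsFull F x := by
  haveI : NeZero (a * b) := ⟨mul_ne_zero (NeZero.ne a) (NeZero.ne b)⟩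
  set fa := ZMod.castHom (dvd_mul_right a b) (ZMod a) with hfa
  set fb := ZMod.castHom (dvd_mul_left b a) (ZMod b) with hfb
  have hdeta : (fa.mapMatrix F).det = 1 := by rw [← RingHom.map_det, hdet, _root_.map_one]
  have hdetb : (fb.mapMatrix F).det = 1 := by rw [← RingHom.map_det, hdet, _root_.map_one]
  rw [isFull_iff hdet]
  intro k hk hkn hfix
  have hfixa : ((fa.mapMatrix F) ^ k).mulVec (fun i => fa (x i)) = (fun i => fa (x i)) := by
    rw [← map_pow, mapMatrix_mulVec]
    funext i
    rw [congrFun hfix i]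
  have hfixb : ((fb.mapMatrix F) ^ k).mulVec (fun i => fb (x i)) = (fun i => fb (x i)) := by
    rw [← map_pow, mapMatrix_mulVec]
    funext i
    rw [congrFun hfix i]
  have hda := fix_dvd hdeta hy hfixa
  have hdb := fix_dvd hdetb hz hfixb
  have : orderOf F ∣ k := by
    rw [crt_order hco F]
    exact Nat.lcm_dvd hda hdb
  have := Nat.le_of_dvd hk this
  omega

theorem crt_step (ha : 1 < a) (hb : 1 < b) (hco : a.Coprime b)
    (F : Matrix (Fin 2) (Fin 2) (ZMod (a * b))) (hdet : F.det = 1)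
    (iha : ∀ G : Matrix (Fin 2) (Fin 2) (ZMod a), G.det = 1 →
      a * a.totient ≤ Nat.card {y : Fin 2 → ZMod a // IsFull G y})
    (ihb : ∀ G : Matrix (Fin 2) (Fin 2) (ZMod b), G.det = 1 →
      b * b.totient ≤ Nat.card {z : Fin 2 → ZMod b // IsFull G z}) :
    (a * b) * (a * b).totient ≤ Nat.card {x : Fin 2 → ZMod (a * b) // IsFull F x} := by
  haveI : NeZero a := ⟨by omega⟩
  haveI : NeZero b := ⟨by omega⟩
  haveI : NeZero (a * b) := ⟨mul_ne_zero (NeZero.ne a) (NeZero.ne b)⟩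
  set fa := ZMod.castHom (dvd_mul_right a b) (ZMod a) with hfa
  set fb := ZMod.castHom (dvd_mul_left b a) (ZMod b) with hfb
  set Fa := fa.mapMatrix F with hFa
  set Fb := fb.mapMatrix F with hFb
  have hdeta : Fa.det = 1 := by rw [hFa, ← RingHom.map_det, hdet, _root_.map_one]
  have hdetb : Fb.det = 1 := by rw [hFb, ← RingHom.map_det, hdet, _root_.map_one]
  -- injection from products of full points
  have hinj : ∃ Φ : {y : Fin 2 → ZMod a // IsFull Fa y} × {z : Fin 2 → ZMod b // IsFull Fb z} →
      {x : Fin 2 → ZMod (a * b) // IsFull F x}, Function.Injective Φ := by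
    have hchoice : ∀ (y : ZMod a) (z : ZMod b), ∃ c : ZMod (a * b), fa c = y ∧ fb c = z :=
      crt_exists hco
    choose c hc1 hc2 using hchoice
    refine ⟨fun s => ⟨fun i => c (s.1.1 i) (s.2.1 i), ?_⟩, ?_⟩
    · apply full_of_components hco hdet
      · have : (fun i => fa (c (s.1.1 i) (s.2.1 i))) = s.1.1 := by
          funext i; exact hc1 _ _
        rw [this]
        exact s.1.2
      · have : (fun i => fb (c (s.1.1 i) (s.2.1 i))) = s.2.1 := by
          funext i; exact hc2 _ _
        rw [this]
        exact s.2.2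
    · rintro ⟨⟨y, hy⟩, ⟨z, hz⟩⟩ ⟨⟨y', hy'⟩, ⟨z', hz'⟩⟩ heq
      simp only [Subtype.mk.injEq, Prod.mk.injEq] at heq ⊢
      constructor
      · funext i
        have := congrFun heq i
        calc y i = fa (c (y i) (z i)) := (hc1 _ _).symm
        _ = fa (c (y' i) (z' i)) := by rw [this]
        _ = y' i := hc1 _ _
      · funext i
        have := congrFun heq i
        calc z i = fb (c (y i) (z i)) := (hc2 _ _).symm
        _ = fb (c (y' i) (z' i)) := by rw [this]
        _ = z' i := hc2 _ _
  obtain ⟨Φ, hΦ⟩ := hinj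
  have hcard : Nat.card ({y : Fin 2 → ZMod a // IsFull Fa y} × {z : Fin 2 → ZMod b // IsFull Fb z})
      ≤ Nat.card {x : Fin 2 → ZMod (a * b) // IsFull F x} :=
    Nat.card_le_card_of_injective Φ hΦ
  rw [Nat.card_prod] at hcard
  have htot : (a * b) * (a * b).totient = (a * a.totient) * (b * b.totient) := by
    rw [Nat.totient_mul hco]
    ring
  rw [htot]
  exact le_trans (Nat.mul_le_mul (iha Fa hdeta) (ihb Fb hdetb)) hcard

end CRT

theorem main_aux : ∀ N : ℕ, N ≠ 0 → Odd N →
    ∀ F : Matrix (Fin 2) (Fin 2) (ZMod N), F.det = 1 →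
    N * N.totient ≤ Nat.card {x : Fin 2 → ZMod N // IsFull F x} := by
  intro N
  induction N using Nat.recOnPosPrimePosCoprime with
  | prime_pow p n hp hn =>
    intro _ hodd F hdet
    have hp' : p.Prime := hp
    have hp2 : p ≠ 2 := by
      rintro rfl
      rw [Nat.odd_iff] at hodd
      have : 2 ∣ 2 ^ n := dvd_pow_self 2 hn.ne'
      omega
    exact prime_pow_case hp' hp2 hn F hdet
  | zero => intro h; exact absurd rfl h
  | one =>
    intro _ _ F hdet
    have hF1 : F = 1 := Subsingleton.elim _ _
    have hord : orderOf F = 1 := by rw [hF1, orderOf_one]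
    have hfull : IsFull F (fun _ => (0 : ZMod 1)) := by
      intro i j _
      have h1 := i.2
      have h2 := j.2
      exact Fin.ext (by omega)
    haveI : Nonempty {x : Fin 2 → ZMod 1 // IsFull F x} := ⟨⟨_, hfull⟩⟩
    have hpos : 0 < Nat.card {x : Fin 2 → ZMod 1 // IsFull F x} := Nat.card_pos
    simpa [Nat.totient_one] using hpos
  | coprime a b ha hb hco iha ihb =>
    intro hne hodd F hdet
    rw [Nat.odd_mul] at hodd
    exact crt_step ha hb hco F hdet
      (fun G hG => iha (by omega) hodd.1 G hG)
      (fun G hG => ihb (by omega) hodd.2 G hG)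


/-- For `N` odd and `F ∈ SL(2, ℤ/Nℤ)`, the number of `F`-full points in
`(ℤ/Nℤ)²` is at least `N·φ(N)`. -/
theorem card_full_points_ge (N : ℕ) [NeZero N] (hN : Odd N)
    (F : Matrix (Fin 2) (Fin 2) (ZMod N)) (hdet : F.det = 1) :
    N * N.totient ≤ Nat.card {x : Fin 2 → ZMod N // IsFull F x} :=
  main_aux N (NeZero.ne N) hN F hdet
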